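/- Let k ≥ 2 and 0 < ε ≤ 1/(9ℓ²k⁴). Let G_1, …, G_ℓ be graphs on the same finite vertex set V, where G_i has m_i edges and maximum degree Δ(G_i) ≤ ε·m_i. Then there exists a partition of V into k classes V_1, …, V_k such that for all i = 1, …, ℓ and all 1 ≤ s < t ≤ k one has e_{G_i}(V_s, V_t) ≥ 2m_i/k² − ε^{1/4}·m_i, and for all i and all 1 ≤ s ≤ k one has e_{G_i}(V_s) ≥ m_i/k² − ε^{1/4}·m_i. -/

import Mathlib

/-- `eBetween G A B` is the number of edges of `G` with one endvertex in `A`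
and the other in `B`. -/
def eBetween {V : Type*} [Fintype V] [DecidableEq V] (G : SimpleGraph V)
    [DecidableRel G.Adj] (A B : Finset V) : ℕ :=
  (G.edgeFinset.filter fun e => ∃ a ∈ A, ∃ b ∈ B, e = s(a, b)).card

/-- `eWithin G S` is the number of edges of `G` with both endvertices in `S`. -/
def eWithin {V : Type*} [Fintype V] [DecidableEq V] (G : SimpleGraph V)
    [DecidableRel G.Adj] (S : Finset V) : ℕ :=
  (G.edgeFinset.filter fun e => ∀ v ∈ e, v ∈ S).card

section AuxLemmas
open Finset
variable {V : Type*} [Fintype V] [DecidableEq V] {k : ℕ}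

lemma count_prescribed (k : ℕ) (A : Finset V) (σ : V → Fin k) :
    ((univ.filter fun f : V → Fin k => ∀ a ∈ A, f a = σ a).card) * k ^ A.card
      = k ^ Fintype.card V := by
  have h : (univ.filter fun f : V → Fin k => ∀ a ∈ A, f a = σ a)
      = Fintype.piFinset (fun a => if a ∈ A then {σ a} else univ) := by
    ext f
    simp only [mem_filter, Fintype.mem_piFinset, mem_univ, true_and]
    constructor
    · intro h a; by_cases ha : a ∈ A <;> simp [ha, h a]
    · intro h a ha; have := h a; simp [ha] at this; exact this
  rw [h, Fintype.card_piFinset]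
  have h2 : ∀ a : V, (if a ∈ A then ({σ a} : Finset (Fin k)) else univ).card
      = if a ∈ A then 1 else k := by
    intro a; by_cases ha : a ∈ A <;> simp [ha]
  rw [Finset.prod_congr rfl fun a _ => h2 a, Finset.prod_ite, Finset.prod_const,
    Finset.prod_const, one_pow, one_mul]
  have h3 : (univ.filter fun a => ¬ a ∈ A) = Aᶜ := by ext a; simp
  have h4 : (univ.filter fun a => a ∈ A) = A := by ext a; simp
  rw [h3, Finset.card_compl, pow_sub_mul_pow _ (Finset.card_le_univ A)]

lemma count_two {a b : V} (hab : a ≠ b) (s t : Fin k) :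
    ((univ.filter fun f : V → Fin k => f a = s ∧ f b = t).card) * k ^ 2
      = k ^ Fintype.card V := by
  have hcp := count_prescribed k {a, b} (fun x => if x = a then s else t)
  have hc : ({a, b} : Finset V).card = 2 := by
    rw [Finset.card_insert_of_notMem (by simp [hab]), Finset.card_singleton]
  rw [hc] at hcp
  have heq : (univ.filter fun f : V → Fin k => f a = s ∧ f b = t)
      = univ.filter (fun f : V → Fin k =>
          ∀ x ∈ ({a, b} : Finset V), f x = if x = a then s else t) := by
    apply Finset.filter_congr
    intro f _
    simp only [Finset.mem_insert, Finset.mem_singleton]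
    constructor
    · rintro ⟨h1, h2⟩ x hx
      rcases hx with rfl | rfl
      · simp [h1]
      · simp [hab.symm, h2]
    · intro h
      refine ⟨?_, ?_⟩
      · have := h a (by simp); simpa using this
      · have := h b (by simp); simpa [hab.symm] using this
  rw [heq, hcp]

lemma count_three {a b c : V} (hab : a ≠ b) (hac : a ≠ c) (hbc : b ≠ c)
    (s t u : Fin k) :
    ((univ.filter fun f : V → Fin k => f a = s ∧ f b = t ∧ f c = u).card) * k ^ 3
      = k ^ Fintype.card V := by
  have hcp := count_prescribed k {a, b, c}
    (fun x => if x = a then s else if x = b then t else u)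
  have hc : ({a, b, c} : Finset V).card = 3 := by
    rw [Finset.card_insert_of_notMem (by simp [hab, hac]),
      Finset.card_insert_of_notMem (by simp [hbc]), Finset.card_singleton]
  rw [hc] at hcp
  have heq : (univ.filter fun f : V → Fin k => f a = s ∧ f b = t ∧ f c = u)
      = univ.filter (fun f : V → Fin k =>
          ∀ x ∈ ({a, b, c} : Finset V), f x = if x = a then s else if x = b then t else u) := by
    apply Finset.filter_congr
    intro f _
    simp only [Finset.mem_insert, Finset.mem_singleton]
    constructor
    · rintro ⟨h1, h2, h3⟩ x hx
      rcases hx with rfl | rfl | rfl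
      · simp [h1]
      · simp [hab.symm, h2]
      · simp [hac.symm, hbc.symm, h3]
    · intro h
      refine ⟨?_, ?_, ?_⟩
      · have := h a (by simp); simpa using this
      · have := h b (by simp); simpa [hab.symm] using this
      · have := h c (by simp); simpa [hac.symm, hbc.symm] using this
  rw [heq, hcp]

lemma count_four {a b c d : V} (hab : a ≠ b) (hac : a ≠ c) (had : a ≠ d)
    (hbc : b ≠ c) (hbd : b ≠ d) (hcd : c ≠ d) (s t u v : Fin k) :
    ((univ.filter fun f : V → Fin k =>
        (f a = s ∧ f b = t) ∧ (f c = u ∧ f d = v)).card) * k ^ 4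
      = k ^ Fintype.card V := by
  have hcp := count_prescribed k {a, b, c, d}
    (fun x => if x = a then s else if x = b then t else if x = c then u else v)
  have hc : ({a, b, c, d} : Finset V).card = 4 := by
    rw [Finset.card_insert_of_notMem (by simp [hab, hac, had]),
      Finset.card_insert_of_notMem (by simp [hbc, hbd]),
      Finset.card_insert_of_notMem (by simp [hcd]), Finset.card_singleton]
  rw [hc] at hcp
  have heq : (univ.filter fun f : V → Fin k => (f a = s ∧ f b = t) ∧ (f c = u ∧ f d = v))
      = univ.filter (fun f : V → Fin k => ∀ x ∈ ({a, b, c, d} : Finset V),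
          f x = if x = a then s else if x = b then t else if x = c then u else v) := by
    apply Finset.filter_congr
    intro f _
    simp only [Finset.mem_insert, Finset.mem_singleton]
    constructor
    · rintro ⟨⟨h1, h2⟩, h3, h4⟩ x hx
      rcases hx with rfl | rfl | rfl | rfl
      · simp [h1]
      · simp [hab.symm, h2]
      · simp [hac.symm, hbc.symm, h3]
      · simp [had.symm, hbd.symm, hcd.symm, h4]
    · intro h
      refine ⟨⟨?_, ?_⟩, ?_, ?_⟩
      · have := h a (by simp); simpa using this
      · have := h b (by simp); simpa [hab.symm] using this
      · have := h c (by simp); simpa [hac.symm, hbc.symm] using this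
      · have := h d (by simp); simpa [had.symm, hbd.symm, hcd.symm] using this
  rw [heq, hcp]

section GraphCounts
variable (G : SimpleGraph V) [DecidableRel G.Adj]

lemma pairCount_within (S : Finset V) :
    ((univ.filter fun p : V × V => G.Adj p.1 p.2).filter
      fun p => p.1 ∈ S ∧ p.2 ∈ S).card = 2 * eWithin G S := by
  classical
  set T := (univ.filter fun p : V × V => G.Adj p.1 p.2).filter
    fun p => p.1 ∈ S ∧ p.2 ∈ S with hT
  set E := G.edgeFinset.filter fun e => ∀ v ∈ e, v ∈ S with hE
  have hmap : ∀ p ∈ T, Sym2.mk p.1 p.2 ∈ E := by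
    rintro ⟨a, b⟩ hp
    simp only [hT, mem_filter, mem_univ, true_and] at hp
    simp only [hE, mem_filter, SimpleGraph.mem_edgeFinset, SimpleGraph.mem_edgeSet]
    refine ⟨hp.1, ?_⟩
    intro v hv
    rw [Sym2.mem_iff] at hv
    rcases hv with rfl | rfl
    · exact hp.2.1
    · exact hp.2.2
  rw [Finset.card_eq_sum_card_fiberwise hmap]
  have hfib : ∀ e ∈ E, (T.filter fun p => Sym2.mk p.1 p.2 = e).card = 2 := by
    intro e he
    induction e using Sym2.ind with
    | _ a b =>
      simp only [hE, mem_filter, SimpleGraph.mem_edgeFinset, SimpleGraph.mem_edgeSet] at he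
      have hadj : G.Adj a b := he.1
      have hab : a ≠ b := hadj.ne
      have haS : a ∈ S := he.2 a (by simp)
      have hbS : b ∈ S := he.2 b (by simp)
      have : T.filter (fun p => Sym2.mk p.1 p.2 = s(a, b)) = {(a, b), (b, a)} := by
        ext ⟨x, y⟩
        simp only [hT, mem_filter, mem_univ, true_and, mem_insert, mem_singleton,
          Sym2.mk_eq_mk_iff, Sym2.eq_iff, Prod.mk.injEq, Prod.ext_iff]
        constructor
        · rintro ⟨-, h⟩; tauto
        · rintro (⟨rfl, rfl⟩ | ⟨rfl, rfl⟩)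
          · exact ⟨⟨hadj, haS, hbS⟩, Or.inl ⟨rfl, rfl⟩⟩
          · exact ⟨⟨hadj.symm, hbS, haS⟩, Or.inr ⟨rfl, rfl⟩⟩
      rw [this, Finset.card_insert_of_notMem (by simp [hab]), Finset.card_singleton]
  rw [Finset.sum_congr rfl hfib, Finset.sum_const, smul_eq_mul, mul_comm]
  rfl

lemma pairCount_between {P Q : Finset V} (hPQ : Disjoint P Q) :
    ((univ.filter fun p : V × V => G.Adj p.1 p.2).filter
      fun p => p.1 ∈ P ∧ p.2 ∈ Q).card = eBetween G P Q := by
  classical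
  set T := (univ.filter fun p : V × V => G.Adj p.1 p.2).filter
    fun p => p.1 ∈ P ∧ p.2 ∈ Q with hT
  set E := G.edgeFinset.filter fun e => ∃ a ∈ P, ∃ b ∈ Q, e = s(a, b) with hE
  apply Finset.card_bij (fun p _ => Sym2.mk p.1 p.2)
  · rintro ⟨a, b⟩ hp
    simp only [hT, mem_filter, mem_univ, true_and] at hp
    simp only [hE, mem_filter, SimpleGraph.mem_edgeFinset, SimpleGraph.mem_edgeSet]
    exact ⟨hp.1, a, hp.2.1, b, hp.2.2, rfl⟩
  · rintro ⟨a, b⟩ ha ⟨c, d⟩ hc h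
    simp only [hT, mem_filter, mem_univ, true_and] at ha hc
    rw [Sym2.mk_eq_mk_iff] at h
    rcases h with h | h
    · exact h
    · exfalso
      have h1 : a = d := (Prod.ext_iff.mp h).1
      have h2 : b = c := (Prod.ext_iff.mp h).2
      subst h1; subst h2
      exact (Finset.disjoint_left.mp hPQ ha.2.1) hc.2.2
  · intro e he
    simp only [hE, mem_filter, SimpleGraph.mem_edgeFinset, SimpleGraph.mem_edgeSet] at he
    obtain ⟨hadj, a, haP, b, hbQ, rfl⟩ := he
    have hab : G.Adj a b := by rwa [← SimpleGraph.mem_edgeSet]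
    exact ⟨(a, b), by simp [hT, mem_filter, hab, haP, hbQ], rfl⟩

lemma pairCount_total :
    (univ.filter fun p : V × V => G.Adj p.1 p.2).card = 2 * G.edgeFinset.card := by
  have h := pairCount_within G (univ : Finset V)
  have h1 : ((univ.filter fun p : V × V => G.Adj p.1 p.2).filter
      fun p => p.1 ∈ (univ : Finset V) ∧ p.2 ∈ (univ : Finset V))
      = univ.filter fun p : V × V => G.Adj p.1 p.2 :=
    Finset.filter_true_of_mem (by simp)
  have h2 : eWithin G (univ : Finset V) = G.edgeFinset.card := by
    rw [eWithin]; rw [Finset.filter_true_of_mem (by intro e _; intro v _; exact mem_univ v)]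
  rw [h1, h2] at h
  exact h

lemma pairCount_fst (a : V) :
    ((univ.filter fun p : V × V => G.Adj p.1 p.2).filter fun q => q.1 = a).card
      = G.degree a := by
  rw [← SimpleGraph.card_neighborFinset_eq_degree]
  apply Finset.card_bij (fun p _ => p.2)
  · rintro ⟨x, y⟩ hp
    simp only [mem_filter, mem_univ, true_and] at hp
    obtain ⟨hadj, rfl⟩ := hp
    simpa [SimpleGraph.mem_neighborFinset] using hadj
  · rintro ⟨x, y⟩ hx ⟨z, w⟩ hz h
    simp only [mem_filter, mem_univ, true_and] at hx hz
    obtain ⟨-, rfl⟩ := hx; obtain ⟨-, rfl⟩ := hz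
    simp_all
  · intro b hb
    rw [SimpleGraph.mem_neighborFinset] at hb
    exact ⟨(a, b), by simp [hb], rfl⟩

lemma pairCount_snd (a : V) :
    ((univ.filter fun p : V × V => G.Adj p.1 p.2).filter fun q => q.2 = a).card
      = G.degree a := by
  rw [← SimpleGraph.card_neighborFinset_eq_degree]
  apply Finset.card_bij (fun p _ => p.1)
  · rintro ⟨x, y⟩ hp
    simp only [mem_filter, mem_univ, true_and] at hp
    obtain ⟨hadj, rfl⟩ := hp
    simpa [SimpleGraph.mem_neighborFinset] using hadj.symm
  · rintro ⟨x, y⟩ hx ⟨z, w⟩ hz h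
    simp only [mem_filter, mem_univ, true_and] at hx hz
    obtain ⟨-, rfl⟩ := hx; obtain ⟨-, rfl⟩ := hz
    simp_all
  · intro b hb
    rw [SimpleGraph.mem_neighborFinset] at hb
    exact ⟨(b, a), by simp [hb.symm], rfl⟩

end GraphCounts

lemma filt_mono {α : Type*} {s : Finset α} {p q : α → Prop}
    [DecidablePred p] [DecidablePred q] (h : ∀ a, p a → q a) :
    s.filter p ⊆ s.filter q := fun a ha =>
  Finset.mem_filter.mpr ⟨(Finset.mem_filter.mp ha).1, h a (Finset.mem_filter.mp ha).2⟩


set_option maxHeartbeats 2000000 in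
lemma bad_card_bound (k : ℕ) (hk : 2 ≤ k)
    (ε : ℝ) (hε : 0 < ε) (G : SimpleGraph V) [DecidableRel G.Adj]
    (M : ℕ) (hm : G.edgeFinset.card = M) (hΔ : (G.maxDegree : ℝ) ≤ ε * M)
    (s t : Fin k) (B : Finset (V → Fin k))
    (hB : ∀ f ∈ B,
      ((((univ.filter fun p : V × V => G.Adj p.1 p.2).filter
          fun p => f p.1 = s ∧ f p.2 = t).card : ℝ)
        < 2 * M / (k : ℝ) ^ 2 - ε ^ ((1:ℝ)/4) * M)) :
    (B.card : ℝ)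
      ≤ 8 * ε ^ ((1:ℝ)/2) * (k : ℝ) ^ Fintype.card V / (k : ℝ) ^ 2 := by
  have hkr : (2:ℝ) ≤ (k:ℝ) := by exact_mod_cast hk
  have hkr0 : (0:ℝ) < (k:ℝ) := by linarith
  set n := Fintype.card V with hn
  set kr := (k:ℝ) with hkr'
  set Kn := kr ^ n with hKn
  have hKn0 : (0:ℝ) < Kn := by positivity
  set D := univ.filter fun p : V × V => G.Adj p.1 p.2 with hD
  set μ : ℝ := 2 * M / kr ^ 2 with hμ
  set lam : ℝ := ε ^ ((1:ℝ)/4) * M with hlam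
  -- trivial case M = 0
  rcases Nat.eq_zero_or_pos M with rfl | hM
  · have hempty : B = ∅ := by
      apply Finset.eq_empty_of_forall_notMem
      intro f hf
      have h2 := hB f hf
      have h1 : μ - lam = 0 := by simp [hμ, hlam]
      rw [h1] at h2
      exact absurd h2 (not_lt.mpr (by positivity))
    rw [hempty]
    simp only [Finset.card_empty, Nat.cast_zero]
    positivity
  -- main case
  have hM1 : (1:ℝ) ≤ (M:ℝ) := by exact_mod_cast hM
  -- 1 ≤ ε * M
  have hεM : (1:ℝ) ≤ ε * M := by
    have hne : G.edgeFinset.Nonempty := by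
      rw [← Finset.card_pos, hm]; exact hM
    obtain ⟨e, he⟩ := hne
    have h1 : (1:ℝ) ≤ (G.maxDegree : ℝ) := by
      induction e using Sym2.ind with
      | _ a b =>
        have hadj : G.Adj a b := by rwa [SimpleGraph.mem_edgeFinset, SimpleGraph.mem_edgeSet] at he
        have hdeg : 1 ≤ G.degree a := by
          rw [← SimpleGraph.card_neighborFinset_eq_degree]
          exact Finset.card_pos.mpr ⟨b, by rwa [SimpleGraph.mem_neighborFinset]⟩
        have := G.degree_le_maxDegree a
        exact_mod_cast le_trans hdeg this
    linarith
  have hDadj : ∀ p ∈ D, G.Adj p.1 p.2 := fun p hp => (mem_filter.mp hp).2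
  have hDcard : (D.card : ℝ) = 2 * M := by
    rw [hD, pairCount_total, hm]; push_cast; ring
  -- counting keys
  have key2 : ∀ a b : V, a ≠ b → ∀ s' t' : Fin k,
      (((univ.filter fun f : V → Fin k => f a = s' ∧ f b = t').card : ℝ)) = Kn / kr ^ 2 := by
    intro a b hab s' t'
    have h := count_two hab s' t'
    have h' : (((univ.filter fun f : V → Fin k => f a = s' ∧ f b = t').card : ℝ)) * kr ^ 2 = Kn := by
      rw [hKn, hkr', hn]; exact_mod_cast h
    field_simp at h' ⊢
    linarith
  have key3 : ∀ a b c : V, a ≠ b → a ≠ c → b ≠ c → ∀ s' t' u' : Fin k,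
      (((univ.filter fun f : V → Fin k => f a = s' ∧ f b = t' ∧ f c = u').card : ℝ)) = Kn / kr ^ 3 := by
    intro a b c hab hac hbc s' t' u'
    have h := count_three hab hac hbc s' t' u'
    have h' : (((univ.filter fun f : V → Fin k => f a = s' ∧ f b = t' ∧ f c = u').card : ℝ)) * kr ^ 3 = Kn := by
      rw [hKn, hkr', hn]; exact_mod_cast h
    field_simp at h' ⊢
    linarith
  have key4 : ∀ a b c d : V, a ≠ b → a ≠ c → a ≠ d → b ≠ c → b ≠ d → c ≠ d →
      ∀ s' t' u' v' : Fin k,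
      (((univ.filter fun f : V → Fin k => (f a = s' ∧ f b = t') ∧ (f c = u' ∧ f d = v')).card : ℝ)) = Kn / kr ^ 4 := by
    intro a b c d hab hac had hbc hbd hcd s' t' u' v'
    have h := count_four hab hac had hbc hbd hcd s' t' u' v'
    have h' : (((univ.filter fun f : V → Fin k =>
        (f a = s' ∧ f b = t') ∧ (f c = u' ∧ f d = v')).card : ℝ)) * kr ^ 4 = Kn := by
      rw [hKn, hkr', hn]; exact_mod_cast h
    field_simp at h' ⊢
    linarith
  -- X as a sum of indicators
  have hXsum : ∀ f : V → Fin k,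
      (((D.filter fun p => f p.1 = s ∧ f p.2 = t).card : ℝ))
        = ∑ p ∈ D, (if f p.1 = s ∧ f p.2 = t then (1:ℝ) else 0) := by
    intro f
    rw [Finset.card_filter]
    push_cast
    exact Finset.sum_congr rfl (fun p _ => by split <;> simp)
  -- first moment
  have hSX : ∑ f : V → Fin k, (((D.filter fun p => f p.1 = s ∧ f p.2 = t).card : ℝ))
      = (D.card : ℝ) * (Kn / kr ^ 2) := by
    calc ∑ f : V → Fin k, (((D.filter fun p => f p.1 = s ∧ f p.2 = t).card : ℝ))
        = ∑ f : V → Fin k, ∑ p ∈ D, (if f p.1 = s ∧ f p.2 = t then (1:ℝ) else 0) :=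
          Finset.sum_congr rfl fun f _ => hXsum f
      _ = ∑ p ∈ D, ∑ f : V → Fin k, (if f p.1 = s ∧ f p.2 = t then (1:ℝ) else 0) :=
          Finset.sum_comm
      _ = ∑ p ∈ D, (((univ.filter fun f : V → Fin k => f p.1 = s ∧ f p.2 = t).card : ℝ)) := by
          refine Finset.sum_congr rfl fun p hp => ?_
          rw [Finset.sum_boole]
      _ = ∑ p ∈ D, (Kn / kr ^ 2) :=
          Finset.sum_congr rfl fun p hp => key2 _ _ (hDadj p hp).ne _ _
      _ = (D.card : ℝ) * (Kn / kr ^ 2) := by rw [Finset.sum_const, nsmul_eq_mul]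
  -- second moment
  have hmulind : ∀ (A B : Prop) (dA : Decidable A) (dB : Decidable B),
      (if A then (1:ℝ) else 0) * (if B then (1:ℝ) else 0) = if A ∧ B then (1:ℝ) else 0 := by
    intro A B dA dB
    by_cases hA : A <;> by_cases hB : B <;> simp [hA, hB]
  have hSXX : ∑ f : V → Fin k, (((D.filter fun p => f p.1 = s ∧ f p.2 = t).card : ℝ)) ^ 2
      = ∑ p ∈ D, ∑ q ∈ D,
          (((univ.filter fun f : V → Fin k =>
            (f p.1 = s ∧ f p.2 = t) ∧ (f q.1 = s ∧ f q.2 = t)).card : ℝ)) := by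
    calc ∑ f : V → Fin k, (((D.filter fun p => f p.1 = s ∧ f p.2 = t).card : ℝ)) ^ 2
        = ∑ f : V → Fin k, ∑ p ∈ D, ∑ q ∈ D,
          (if (f p.1 = s ∧ f p.2 = t) ∧ (f q.1 = s ∧ f q.2 = t) then (1:ℝ) else 0) := by
          refine Finset.sum_congr rfl fun f _ => ?_
          rw [hXsum f, sq, Finset.sum_mul_sum]
          exact Finset.sum_congr rfl fun p _ =>
            Finset.sum_congr rfl fun q _ => hmulind _ _ _ _
      _ = ∑ p ∈ D, ∑ q ∈ D, ∑ f : V → Fin k,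
          (if (f p.1 = s ∧ f p.2 = t) ∧ (f q.1 = s ∧ f q.2 = t) then (1:ℝ) else 0) := by
          rw [Finset.sum_comm]
          exact Finset.sum_congr rfl fun p _ => Finset.sum_comm
      _ = _ := Finset.sum_congr rfl fun p _ => Finset.sum_congr rfl fun q _ => by
          rw [Finset.sum_boole]
  set Δr : ℝ := (G.maxDegree : ℝ) with hΔr
  have hΔr0 : (0:ℝ) ≤ Δr := Nat.cast_nonneg _
  have htouchcard : ∀ p : V × V,
      (((D.filter fun q : V × V => q.1 = p.1 ∨ q.1 = p.2 ∨ q.2 = p.1 ∨ q.2 = p.2).card : ℝ))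
        ≤ 4 * Δr := by
    intro p
    have hsub : (D.filter fun q : V × V => q.1 = p.1 ∨ q.1 = p.2 ∨ q.2 = p.1 ∨ q.2 = p.2)
        ⊆ ((D.filter fun q : V × V => q.1 = p.1) ∪ (D.filter fun q : V × V => q.1 = p.2)) ∪
          ((D.filter fun q : V × V => q.2 = p.1) ∪ (D.filter fun q : V × V => q.2 = p.2)) := by
      intro q hq
      rw [mem_filter] at hq
      simp only [mem_union, mem_filter]
      tauto
    have hle := Finset.card_le_card hsub
    have h1 := Finset.card_union_le
      ((D.filter fun q : V × V => q.1 = p.1) ∪ (D.filter fun q : V × V => q.1 = p.2))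
      ((D.filter fun q : V × V => q.2 = p.1) ∪ (D.filter fun q : V × V => q.2 = p.2))
    have h2 := Finset.card_union_le (D.filter fun q : V × V => q.1 = p.1)
      (D.filter fun q : V × V => q.1 = p.2)
    have h3 := Finset.card_union_le (D.filter fun q : V × V => q.2 = p.1)
      (D.filter fun q : V × V => q.2 = p.2)
    have e1 : (D.filter fun q : V × V => q.1 = p.1).card = G.degree p.1 := pairCount_fst G p.1
    have e2 : (D.filter fun q : V × V => q.1 = p.2).card = G.degree p.2 := pairCount_fst G p.2
    have e3 : (D.filter fun q : V × V => q.2 = p.1).card = G.degree p.1 := pairCount_snd G p.1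
    have e4 : (D.filter fun q : V × V => q.2 = p.2).card = G.degree p.2 := pairCount_snd G p.2
    have hdeg1 : (G.degree p.1 : ℝ) ≤ Δr := by
      rw [hΔr]; exact_mod_cast G.degree_le_maxDegree p.1
    have hdeg2 : (G.degree p.2 : ℝ) ≤ Δr := by
      rw [hΔr]; exact_mod_cast G.degree_le_maxDegree p.2
    have hnat : (D.filter fun q : V × V =>
        q.1 = p.1 ∨ q.1 = p.2 ∨ q.2 = p.1 ∨ q.2 = p.2).card
        ≤ G.degree p.1 + G.degree p.2 + (G.degree p.1 + G.degree p.2) := by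
      calc _ ≤ _ := hle
        _ ≤ _ := h1
        _ ≤ _ := add_le_add h2 h3
        _ = _ := by rw [e1, e2, e3, e4]
    have := (Nat.cast_le (α := ℝ)).mpr hnat
    push_cast at this
    linarith
  -- per-p bound on the sum of joint counts
  have hq : ∀ p ∈ D, (∑ q ∈ D, (((univ.filter fun f : V → Fin k =>
        (f p.1 = s ∧ f p.2 = t) ∧ (f q.1 = s ∧ f q.2 = t)).card : ℝ)))
      ≤ (D.card : ℝ) * (Kn / kr ^ 4) + (2 * (Kn / kr ^ 2) + 4 * Δr * (Kn / kr ^ 3)) := by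
    intro p hp
    have hpne : p.1 ≠ p.2 := (hDadj p hp).ne
    rw [← Finset.sum_filter_add_sum_filter_not D
      (fun q : V × V => q.1 = p.1 ∨ q.1 = p.2 ∨ q.2 = p.1 ∨ q.2 = p.2)]
    have hA : ∑ q ∈ D.filter
        (fun q : V × V => ¬(q.1 = p.1 ∨ q.1 = p.2 ∨ q.2 = p.1 ∨ q.2 = p.2)),
        (((univ.filter fun f : V → Fin k =>
          (f p.1 = s ∧ f p.2 = t) ∧ (f q.1 = s ∧ f q.2 = t)).card : ℝ))
        ≤ (D.card : ℝ) * (Kn / kr ^ 4) := by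
      have heach : ∀ q ∈ D.filter
          (fun q : V × V => ¬(q.1 = p.1 ∨ q.1 = p.2 ∨ q.2 = p.1 ∨ q.2 = p.2)),
          (((univ.filter fun f : V → Fin k =>
            (f p.1 = s ∧ f p.2 = t) ∧ (f q.1 = s ∧ f q.2 = t)).card : ℝ)) = Kn / kr ^ 4 := by
        intro q hq'
        rw [mem_filter] at hq'
        push_neg at hq'
        obtain ⟨hqD, h1, h2, h3, h4⟩ := hq'
        exact key4 p.1 p.2 q.1 q.2 hpne (Ne.symm h1) (Ne.symm h3)
          (Ne.symm h2) (Ne.symm h4) (hDadj q hqD).ne s t s t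
      rw [Finset.sum_congr rfl heach, Finset.sum_const, nsmul_eq_mul]
      have hcard : ((D.filter (fun q : V × V =>
          ¬(q.1 = p.1 ∨ q.1 = p.2 ∨ q.2 = p.1 ∨ q.2 = p.2))).card : ℝ) ≤ (D.card : ℝ) := by
        exact_mod_cast Finset.card_filter_le _ _
      have hpos : (0:ℝ) ≤ Kn / kr ^ 4 := by positivity
      exact mul_le_mul_of_nonneg_right hcard hpos
    have hB : ∑ q ∈ D.filter
        (fun q : V × V => q.1 = p.1 ∨ q.1 = p.2 ∨ q.2 = p.1 ∨ q.2 = p.2),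
        (((univ.filter fun f : V → Fin k =>
          (f p.1 = s ∧ f p.2 = t) ∧ (f q.1 = s ∧ f q.2 = t)).card : ℝ))
        ≤ 2 * (Kn / kr ^ 2) + 4 * Δr * (Kn / kr ^ 3) := by
      rw [← Finset.sum_filter_add_sum_filter_not
        (D.filter (fun q : V × V => q.1 = p.1 ∨ q.1 = p.2 ∨ q.2 = p.1 ∨ q.2 = p.2))
        (fun q : V × V => q = p ∨ q = (p.2, p.1))]
      have hB1 : ∑ q ∈ (D.filter
          (fun q : V × V => q.1 = p.1 ∨ q.1 = p.2 ∨ q.2 = p.1 ∨ q.2 = p.2)).filter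
          (fun q : V × V => q = p ∨ q = (p.2, p.1)),
          (((univ.filter fun f : V → Fin k =>
            (f p.1 = s ∧ f p.2 = t) ∧ (f q.1 = s ∧ f q.2 = t)).card : ℝ))
          ≤ 2 * (Kn / kr ^ 2) := by
        have hbound : ∀ q ∈ (D.filter
            (fun q : V × V => q.1 = p.1 ∨ q.1 = p.2 ∨ q.2 = p.1 ∨ q.2 = p.2)).filter
            (fun q : V × V => q = p ∨ q = (p.2, p.1)),
            (((univ.filter fun f : V → Fin k =>
              (f p.1 = s ∧ f p.2 = t) ∧ (f q.1 = s ∧ f q.2 = t)).card : ℝ)) ≤ Kn / kr ^ 2 := by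
          intro q _
          have hsub : (univ.filter fun f : V → Fin k =>
              (f p.1 = s ∧ f p.2 = t) ∧ (f q.1 = s ∧ f q.2 = t))
              ⊆ (univ.filter fun f : V → Fin k => f p.1 = s ∧ f p.2 = t) :=
            filt_mono (fun f h => h.1)
          have := Finset.card_le_card hsub
          calc (((univ.filter fun f : V → Fin k =>
              (f p.1 = s ∧ f p.2 = t) ∧ (f q.1 = s ∧ f q.2 = t)).card : ℝ))
              ≤ (((univ.filter fun f : V → Fin k => f p.1 = s ∧ f p.2 = t).card : ℝ)) := by
                exact_mod_cast this
            _ = Kn / kr ^ 2 := key2 _ _ hpne _ _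
        have hcard2 : ((D.filter
            (fun q : V × V => q.1 = p.1 ∨ q.1 = p.2 ∨ q.2 = p.1 ∨ q.2 = p.2)).filter
            (fun q : V × V => q = p ∨ q = (p.2, p.1))).card ≤ 2 := by
          have hsub2 : ((D.filter
              (fun q : V × V => q.1 = p.1 ∨ q.1 = p.2 ∨ q.2 = p.1 ∨ q.2 = p.2)).filter
              (fun q : V × V => q = p ∨ q = (p.2, p.1)))
              ⊆ {p, (p.2, p.1)} := by
            intro q hq'
            rw [mem_filter] at hq'
            simp only [mem_insert, mem_singleton]
            exact hq'.2
          calc _ ≤ ({p, (p.2, p.1)} : Finset (V × V)).card := Finset.card_le_card hsub2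
            _ ≤ _ := Finset.card_insert_le _ _
            _ = 2 := by rw [Finset.card_singleton]
        calc _ ≤ _ := Finset.sum_le_card_nsmul _ _ _ hbound
          _ ≤ 2 * (Kn / kr ^ 2) := by
            rw [nsmul_eq_mul]
            have : (0:ℝ) ≤ Kn / kr ^ 2 := by positivity
            have h2' : ((((D.filter
              (fun q : V × V => q.1 = p.1 ∨ q.1 = p.2 ∨ q.2 = p.1 ∨ q.2 = p.2)).filter
              (fun q : V × V => q = p ∨ q = (p.2, p.1))).card : ℝ)) ≤ 2 := by
              exact_mod_cast hcard2
            exact mul_le_mul_of_nonneg_right h2' this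
      have hB2 : ∑ q ∈ (D.filter
          (fun q : V × V => q.1 = p.1 ∨ q.1 = p.2 ∨ q.2 = p.1 ∨ q.2 = p.2)).filter
          (fun q : V × V => ¬(q = p ∨ q = (p.2, p.1))),
          (((univ.filter fun f : V → Fin k =>
            (f p.1 = s ∧ f p.2 = t) ∧ (f q.1 = s ∧ f q.2 = t)).card : ℝ))
          ≤ 4 * Δr * (Kn / kr ^ 3) := by
        have hbound : ∀ q ∈ (D.filter
            (fun q : V × V => q.1 = p.1 ∨ q.1 = p.2 ∨ q.2 = p.1 ∨ q.2 = p.2)).filter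
            (fun q : V × V => ¬(q = p ∨ q = (p.2, p.1))),
            (((univ.filter fun f : V → Fin k =>
              (f p.1 = s ∧ f p.2 = t) ∧ (f q.1 = s ∧ f q.2 = t)).card : ℝ)) ≤ Kn / kr ^ 3 := by
          intro q hq'
          rw [mem_filter, mem_filter] at hq'
          obtain ⟨⟨hqD, -⟩, hns⟩ := hq'
          push_neg at hns
          obtain ⟨hnp, hnsw⟩ := hns
          have hqne : q.1 ≠ q.2 := (hDadj q hqD).ne
          have hmain : (q.1 ≠ p.1 ∧ q.1 ≠ p.2) ∨ (q.2 ≠ p.1 ∧ q.2 ≠ p.2) := by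
            rcases eq_or_ne q.1 p.1 with h1 | h1
            · right
              constructor
              · rw [← h1]; exact hqne.symm
              · intro h2
                exact hnp (Prod.ext h1 h2)
            · rcases eq_or_ne q.1 p.2 with h2 | h2
              · right
                constructor
                · intro h3
                  exact hnsw (Prod.ext h2 h3)
                · rw [← h2]; exact hqne.symm
              · left; exact ⟨h1, h2⟩
          rcases hmain with ⟨h1, h2⟩ | ⟨h1, h2⟩
          · have hsub : (univ.filter fun f : V → Fin k =>
                (f p.1 = s ∧ f p.2 = t) ∧ (f q.1 = s ∧ f q.2 = t))
                ⊆ (univ.filter fun f : V → Fin k => f p.1 = s ∧ f p.2 = t ∧ f q.1 = s) :=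
              filt_mono (fun f h => ⟨h.1.1, h.1.2, h.2.1⟩)
            have hcle := Finset.card_le_card hsub
            calc (((univ.filter fun f : V → Fin k =>
                (f p.1 = s ∧ f p.2 = t) ∧ (f q.1 = s ∧ f q.2 = t)).card : ℝ))
                ≤ (((univ.filter fun f : V → Fin k =>
                  f p.1 = s ∧ f p.2 = t ∧ f q.1 = s).card : ℝ)) := by exact_mod_cast hcle
              _ = Kn / kr ^ 3 := key3 _ _ _ hpne h1.symm h2.symm _ _ _
          · have hsub : (univ.filter fun f : V → Fin k =>
                (f p.1 = s ∧ f p.2 = t) ∧ (f q.1 = s ∧ f q.2 = t))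
                ⊆ (univ.filter fun f : V → Fin k => f p.1 = s ∧ f p.2 = t ∧ f q.2 = t) :=
              filt_mono (fun f h => ⟨h.1.1, h.1.2, h.2.2⟩)
            have hcle := Finset.card_le_card hsub
            calc (((univ.filter fun f : V → Fin k =>
                (f p.1 = s ∧ f p.2 = t) ∧ (f q.1 = s ∧ f q.2 = t)).card : ℝ))
                ≤ (((univ.filter fun f : V → Fin k =>
                  f p.1 = s ∧ f p.2 = t ∧ f q.2 = t).card : ℝ)) := by exact_mod_cast hcle
              _ = Kn / kr ^ 3 := key3 _ _ _ hpne h1.symm h2.symm _ _ _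
        have hcard3 : ((((D.filter
            (fun q : V × V => q.1 = p.1 ∨ q.1 = p.2 ∨ q.2 = p.1 ∨ q.2 = p.2)).filter
            (fun q : V × V => ¬(q = p ∨ q = (p.2, p.1)))).card : ℝ)) ≤ 4 * Δr := by
          have hle3 : (((D.filter
              (fun q : V × V => q.1 = p.1 ∨ q.1 = p.2 ∨ q.2 = p.1 ∨ q.2 = p.2)).filter
              (fun q : V × V => ¬(q = p ∨ q = (p.2, p.1)))).card)
              ≤ ((D.filter
              (fun q : V × V => q.1 = p.1 ∨ q.1 = p.2 ∨ q.2 = p.1 ∨ q.2 = p.2)).card) :=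
            Finset.card_filter_le _ _
          calc ((((D.filter
              (fun q : V × V => q.1 = p.1 ∨ q.1 = p.2 ∨ q.2 = p.1 ∨ q.2 = p.2)).filter
              (fun q : V × V => ¬(q = p ∨ q = (p.2, p.1)))).card : ℝ))
              ≤ (((D.filter
              (fun q : V × V => q.1 = p.1 ∨ q.1 = p.2 ∨ q.2 = p.1 ∨ q.2 = p.2)).card : ℝ)) := by
                exact_mod_cast hle3
            _ ≤ 4 * Δr := htouchcard p
        calc _ ≤ _ := Finset.sum_le_card_nsmul _ _ _ hbound
          _ ≤ 4 * Δr * (Kn / kr ^ 3) := by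
            rw [nsmul_eq_mul]
            have hpos3 : (0:ℝ) ≤ Kn / kr ^ 3 := by positivity
            exact mul_le_mul_of_nonneg_right hcard3 hpos3
      linarith
    linarith
  set Mr : ℝ := (M : ℝ) with hMr
  have hM0 : (0:ℝ) < Mr := by rw [hMr]; exact_mod_cast hM
  -- total second moment bound
  have hSXX2 : ∑ f : V → Fin k, (((D.filter fun p => f p.1 = s ∧ f p.2 = t).card : ℝ)) ^ 2
      ≤ (D.card : ℝ) * ((D.card : ℝ) * (Kn / kr ^ 4)
          + (2 * (Kn / kr ^ 2) + 4 * Δr * (Kn / kr ^ 3))) := by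
    rw [hSXX]
    calc ∑ p ∈ D, ∑ q ∈ D, (((univ.filter fun f : V → Fin k =>
          (f p.1 = s ∧ f p.2 = t) ∧ (f q.1 = s ∧ f q.2 = t)).card : ℝ))
        ≤ ∑ _p ∈ D, ((D.card : ℝ) * (Kn / kr ^ 4)
            + (2 * (Kn / kr ^ 2) + 4 * Δr * (Kn / kr ^ 3))) := Finset.sum_le_sum hq
      _ = _ := by rw [Finset.sum_const, nsmul_eq_mul]
  have hcardF : ((univ : Finset (V → Fin k)).card : ℝ) = Kn := by
    rw [Finset.card_univ, Fintype.card_fun, Fintype.card_fin, hKn, hkr', hn]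
    push_cast
    rfl
  -- variance identity
  have hvar : ∑ f : V → Fin k,
      ((((D.filter fun p => f p.1 = s ∧ f p.2 = t).card : ℝ)) - μ) ^ 2
      = (∑ f : V → Fin k, (((D.filter fun p => f p.1 = s ∧ f p.2 = t).card : ℝ)) ^ 2)
        - 2 * μ * (∑ f : V → Fin k, (((D.filter fun p => f p.1 = s ∧ f p.2 = t).card : ℝ)))
        + Kn * μ ^ 2 := by
    have hexp : ∀ f : V → Fin k,
        ((((D.filter fun p => f p.1 = s ∧ f p.2 = t).card : ℝ)) - μ) ^ 2
        = (((D.filter fun p => f p.1 = s ∧ f p.2 = t).card : ℝ)) ^ 2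
          - 2 * μ * (((D.filter fun p => f p.1 = s ∧ f p.2 = t).card : ℝ)) + μ ^ 2 :=
      fun f => by ring
    rw [Finset.sum_congr rfl fun f _ => hexp f, Finset.sum_add_distrib,
      Finset.sum_sub_distrib, ← Finset.mul_sum, Finset.sum_const, nsmul_eq_mul, hcardF]
  -- variance bound
  have hkrne : kr ≠ 0 := ne_of_gt hkr0
  have hvb : ∑ f : V → Fin k,
      ((((D.filter fun p => f p.1 = s ∧ f p.2 = t).card : ℝ)) - μ) ^ 2
      ≤ 4 * Mr * (Kn / kr ^ 2) + 8 * Mr * Δr * (Kn / kr ^ 3) := by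
    rw [hvar, hSX, hDcard, hμ]
    have hid : 2 * Mr * (2 * Mr * (Kn / kr ^ 4))
        - 2 * (2 * Mr / kr ^ 2) * (2 * Mr * (Kn / kr ^ 2)) + Kn * (2 * Mr / kr ^ 2) ^ 2
        = 0 := by
      field_simp
      ring
    have h0 := hSXX2
    rw [hDcard] at h0
    linarith [h0, hid]
  -- Chebyshev
  have hrp4 : (0:ℝ) < ε ^ ((1:ℝ)/4) := Real.rpow_pos_of_pos hε _
  have hlam0 : 0 < lam := by rw [hlam]; exact mul_pos hrp4 hM0
  have hcheb : (B.card : ℝ) * lam ^ 2 ≤ ∑ f : V → Fin k,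
      ((((D.filter fun p => f p.1 = s ∧ f p.2 = t).card : ℝ)) - μ) ^ 2 := by
    have h1 : ∀ f ∈ B, lam ^ 2
        ≤ ((((D.filter fun p => f p.1 = s ∧ f p.2 = t).card : ℝ)) - μ) ^ 2 := by
      intro f hf
      have hlt := hB f hf
      have ha : 0 < μ - (((D.filter fun p => f p.1 = s ∧ f p.2 = t).card : ℝ)) - lam := by
        linarith
      have hb : 0 < μ - (((D.filter fun p => f p.1 = s ∧ f p.2 = t).card : ℝ)) + lam := by
        linarith
      nlinarith [mul_pos ha hb]
    calc (B.card : ℝ) * lam ^ 2 = ∑ _f ∈ B, lam ^ 2 := by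
          rw [Finset.sum_const, nsmul_eq_mul]
      _ ≤ ∑ f ∈ B, ((((D.filter fun p => f p.1 = s ∧ f p.2 = t).card : ℝ)) - μ) ^ 2 :=
          Finset.sum_le_sum h1
      _ ≤ _ := Finset.sum_le_sum_of_subset_of_nonneg (Finset.subset_univ B)
          (fun f _ _ => sq_nonneg _)
  -- arithmetic finish
  have hlamsq : lam ^ 2 = ε ^ ((1:ℝ)/2) * Mr ^ 2 := by
    rw [hlam, mul_pow, ← Real.rpow_natCast (ε ^ ((1:ℝ)/4)) 2, ← Real.rpow_mul hε.le]
    norm_num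
  have hC2 : (0:ℝ) < Kn / kr ^ 2 := by positivity
  have hεM' : Mr ≤ ε * Mr ^ 2 := by
    nlinarith [hεM, hM0]
  have hC3 : Kn / kr ^ 3 ≤ (Kn / kr ^ 2) / 2 := by
    have h1 : 2 * kr ^ 2 ≤ kr ^ 3 := by nlinarith [hkr, hkr0]
    have h2 : Kn / kr ^ 3 ≤ Kn / (2 * kr ^ 2) :=
      div_le_div_of_nonneg_left hKn0.le (by positivity) h1
    calc Kn / kr ^ 3 ≤ Kn / (2 * kr ^ 2) := h2
      _ = (Kn / kr ^ 2) / 2 := by ring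
  have hΔ' : Δr ≤ ε * Mr := by rw [hΔr, hMr]; exact hΔ
  have hfinal : (B.card : ℝ) * (ε ^ ((1:ℝ)/2) * Mr ^ 2)
      ≤ 8 * ε * Mr ^ 2 * (Kn / kr ^ 2) := by
    rw [← hlamsq]
    refine (hcheb.trans hvb).trans ?_
    have t1 : 4 * Mr * (Kn / kr ^ 2) ≤ 4 * (ε * Mr ^ 2) * (Kn / kr ^ 2) :=
      mul_le_mul_of_nonneg_right (by linarith [hεM']) hC2.le
    have t2 : 8 * Mr * Δr * (Kn / kr ^ 3) ≤ 8 * Mr * (ε * Mr) * (Kn / kr ^ 3) := by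
      have h3 : (0:ℝ) ≤ Kn / kr ^ 3 := by positivity
      exact mul_le_mul_of_nonneg_right
        (mul_le_mul_of_nonneg_left hΔ' (by positivity)) h3
    have t3 : 8 * Mr * (ε * Mr) * (Kn / kr ^ 3) ≤ 8 * Mr * (ε * Mr) * ((Kn / kr ^ 2) / 2) := by
      have : (0:ℝ) ≤ 8 * Mr * (ε * Mr) := by positivity
      exact mul_le_mul_of_nonneg_left hC3 this
    nlinarith [t1, t2, t3]
  have hεhpos : (0:ℝ) < ε ^ ((1:ℝ)/2) := Real.rpow_pos_of_pos hε _
  have hehalf : ε ^ ((1:ℝ)/2) * ε ^ ((1:ℝ)/2) = ε := by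
    rw [← Real.rpow_add hε]; norm_num
  have hrhs : 8 * ε * Mr ^ 2 * (Kn / kr ^ 2)
      = (8 * ε ^ ((1:ℝ)/2) * Kn / kr ^ 2) * (ε ^ ((1:ℝ)/2) * Mr ^ 2) := by
    rw [show (8 * ε ^ ((1:ℝ)/2) * Kn / kr ^ 2) * (ε ^ ((1:ℝ)/2) * Mr ^ 2)
        = 8 * (ε ^ ((1:ℝ)/2) * ε ^ ((1:ℝ)/2)) * Mr ^ 2 * (Kn / kr ^ 2) from by ring, hehalf]
  rw [hrhs] at hfinal
  have := le_of_mul_le_mul_right hfinal (by positivity : (0:ℝ) < ε ^ ((1:ℝ)/2) * Mr ^ 2)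
  exact this

end AuxLemmas

open Finset in
/-- Let `k ≥ 2` and `0 < ε ≤ 1/(9ℓ²k⁴)`. Given graphs `G 1, …, G ℓ` on the same
finite vertex set, where `G i` has `m i` edges and maximum degree at most `ε * m i`,
there is a partition of `V` into `k` classes `P 1, …, P k` such that for all `i`
and all `s ≠ t` we have `e_{G i}(P s, P t) ≥ 2 m i / k² - ε^{1/4} m i` and
for all `i, s` we have `e_{G i}(P s) ≥ m i / k² - ε^{1/4} m i`. -/
theorem simultaneous_kpartition_pairs {V : Type*} [Fintype V] [DecidableEq V]
    (k ℓ : ℕ) (hk : 2 ≤ k) (ε : ℝ) (hε : 0 < ε)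
    (hε' : ε ≤ 1 / (9 * (ℓ : ℝ) ^ 2 * (k : ℝ) ^ 4))
    (G : Fin ℓ → SimpleGraph V) [∀ i, DecidableRel (G i).Adj]
    (m : Fin ℓ → ℕ) (hm : ∀ i, (G i).edgeFinset.card = m i)
    (hΔ : ∀ i, ((G i).maxDegree : ℝ) ≤ ε * m i) :
    ∃ P : Fin k → Finset V,
      (∀ s t : Fin k, s ≠ t → Disjoint (P s) (P t)) ∧
      Finset.univ.biUnion P = Finset.univ ∧
      (∀ i, ∀ s t : Fin k, s ≠ t →
        (eBetween (G i) (P s) (P t) : ℝ) ≥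
          2 * m i / (k : ℝ) ^ 2 - ε ^ ((1 : ℝ) / 4) * m i) ∧
      (∀ i, ∀ s : Fin k,
        (eWithin (G i) (P s) : ℝ) ≥ (m i : ℝ) / (k : ℝ) ^ 2 - ε ^ ((1 : ℝ) / 4) * m i) := by
  classical
  rcases Nat.eq_zero_or_pos ℓ with rfl | hℓ
  · exfalso
    norm_num at hε'
    linarith
  have hℓr : (1:ℝ) ≤ (ℓ:ℝ) := by exact_mod_cast hℓ
  have hkr : (2:ℝ) ≤ (k:ℝ) := by exact_mod_cast hk
  have hkr0 : (0:ℝ) < (k:ℝ) := by linarith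
  set n := Fintype.card V with hn
  have hKpos : (0:ℝ) < (k:ℝ) ^ n := by positivity
  -- sqrt epsilon bound
  have hsq : ε ^ ((1:ℝ)/2) ≤ 1 / (3 * (ℓ:ℝ) * (k:ℝ) ^ 2) := by
    have hc0 : (0:ℝ) < 3 * (ℓ:ℝ) * (k:ℝ) ^ 2 := by positivity
    have hcsq : ε ≤ (1 / (3 * (ℓ:ℝ) * (k:ℝ) ^ 2)) ^ (2:ℕ) := by
      calc ε ≤ 1 / (9 * (ℓ:ℝ) ^ 2 * (k:ℝ) ^ 4) := hε'
        _ = (1 / (3 * (ℓ:ℝ) * (k:ℝ) ^ 2)) ^ (2:ℕ) := by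
            field_simp
            ring
    calc ε ^ ((1:ℝ)/2) ≤ ((1 / (3 * (ℓ:ℝ) * (k:ℝ) ^ 2)) ^ (2:ℕ)) ^ ((1:ℝ)/2) :=
        Real.rpow_le_rpow hε.le hcsq (by norm_num)
      _ = 1 / (3 * (ℓ:ℝ) * (k:ℝ) ^ 2) := by
        rw [← Real.rpow_natCast (1 / (3 * (ℓ:ℝ) * (k:ℝ) ^ 2)) 2,
          ← Real.rpow_mul (by positivity)]
        norm_num
  -- Bad sets
  set Bad : Fin ℓ → Fin k → Fin k → Finset (V → Fin k) := fun i s t =>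
    univ.filter fun f =>
      ((((univ.filter fun p : V × V => (G i).Adj p.1 p.2).filter
          fun p => f p.1 = s ∧ f p.2 = t).card : ℝ)
        < 2 * m i / (k : ℝ) ^ 2 - ε ^ ((1:ℝ)/4) * m i) with hBad
  have hBadcard : ∀ (i : Fin ℓ) (s t : Fin k), ((Bad i s t).card : ℝ)
      ≤ 8 * ε ^ ((1:ℝ)/2) * (k : ℝ) ^ n / (k : ℝ) ^ 2 := by
    intro i s' t'
    apply bad_card_bound k hk ε hε (G i) (m i) (hm i) (hΔ i) s' t'
    intro f hf
    rw [hBad] at hf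
    exact (mem_filter.mp hf).2
  -- existence of a good coloring
  have hex : ∃ f : V → Fin k, ∀ (i : Fin ℓ) (s' t' : Fin k), f ∉ Bad i s' t' := by
    by_contra hcon
    push_neg at hcon
    have hcover : (univ : Finset (V → Fin k)) ⊆
        (univ : Finset (Fin ℓ × Fin k × Fin k)).biUnion
          (fun z => Bad z.1 z.2.1 z.2.2) := by
      intro f _
      obtain ⟨i, s', t', hmem⟩ := hcon f
      exact Finset.mem_biUnion.mpr ⟨(i, s', t'), mem_univ _, hmem⟩
    have hcard := Finset.card_le_card hcover
    have hcard2 := Finset.card_biUnion_le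
      (s := (univ : Finset (Fin ℓ × Fin k × Fin k))) (t := fun z => Bad z.1 z.2.1 z.2.2)
    have h1 : ((univ : Finset (V → Fin k)).card : ℝ) = (k:ℝ) ^ n := by
      rw [Finset.card_univ, Fintype.card_fun, Fintype.card_fin, hn]
      push_cast
      rfl
    have h2 : ((k:ℝ)) ^ n ≤ ∑ z : Fin ℓ × Fin k × Fin k,
        ((Bad z.1 z.2.1 z.2.2).card : ℝ) := by
      rw [← h1]
      have := hcard.trans hcard2
      exact_mod_cast this
    have h3 : ∑ z : Fin ℓ × Fin k × Fin k, ((Bad z.1 z.2.1 z.2.2).card : ℝ)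
        ≤ ((ℓ : ℝ) * ((k:ℝ) * (k:ℝ))) * (8 * ε ^ ((1:ℝ)/2) * (k : ℝ) ^ n / (k : ℝ) ^ 2) := by
      calc ∑ z : Fin ℓ × Fin k × Fin k, ((Bad z.1 z.2.1 z.2.2).card : ℝ)
          ≤ ∑ _z : Fin ℓ × Fin k × Fin k,
            (8 * ε ^ ((1:ℝ)/2) * (k : ℝ) ^ n / (k : ℝ) ^ 2) :=
            Finset.sum_le_sum fun z _ => hBadcard z.1 z.2.1 z.2.2
        _ = ((Fintype.card (Fin ℓ × Fin k × Fin k) : ℝ))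
            * (8 * ε ^ ((1:ℝ)/2) * (k : ℝ) ^ n / (k : ℝ) ^ 2) := by
            rw [Finset.sum_const, Finset.card_univ, nsmul_eq_mul]
        _ = ((ℓ : ℝ) * ((k:ℝ) * (k:ℝ))) * (8 * ε ^ ((1:ℝ)/2) * (k : ℝ) ^ n / (k : ℝ) ^ 2) := by
            simp only [Fintype.card_prod, Fintype.card_fin]
            push_cast
            ring
    have h4 : ((ℓ : ℝ) * ((k:ℝ) * (k:ℝ))) * (8 * ε ^ ((1:ℝ)/2) * (k : ℝ) ^ n / (k : ℝ) ^ 2)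
        = 8 * (ℓ:ℝ) * ε ^ ((1:ℝ)/2) * (k : ℝ) ^ n := by
      field_simp
    have h5 : 8 * (ℓ:ℝ) * ε ^ ((1:ℝ)/2) * (k : ℝ) ^ n
        ≤ 8 * (ℓ:ℝ) * (1 / (3 * (ℓ:ℝ) * (k:ℝ) ^ 2)) * (k : ℝ) ^ n := by
      have h0 : (0:ℝ) ≤ 8 * (ℓ:ℝ) := by positivity
      exact mul_le_mul_of_nonneg_right
        (mul_le_mul_of_nonneg_left hsq h0) hKpos.le
    have h6 : 8 * (ℓ:ℝ) * (1 / (3 * (ℓ:ℝ) * (k:ℝ) ^ 2)) * (k : ℝ) ^ n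
        = (8 / (3 * (k:ℝ) ^ 2)) * (k : ℝ) ^ n := by
      have hℓ0 : (ℓ:ℝ) ≠ 0 := by linarith
      field_simp
    have h7 : (8 / (3 * (k:ℝ) ^ 2)) * (k : ℝ) ^ n ≤ (2/3) * (k : ℝ) ^ n := by
      have hk4 : (4:ℝ) ≤ (k:ℝ) ^ 2 := by nlinarith [hkr]
      have : 8 / (3 * (k:ℝ) ^ 2) ≤ 2/3 := by
        rw [div_le_div_iff₀ (by positivity) (by norm_num)]
        nlinarith [hk4]
      exact mul_le_mul_of_nonneg_right this hKpos.le
    linarith [h2, h3, h4.le, h5, h6.le, h7]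
  obtain ⟨f, hf⟩ := hex
  have hgood : ∀ (i : Fin ℓ) (s' t' : Fin k),
      2 * m i / (k : ℝ) ^ 2 - ε ^ ((1:ℝ)/4) * m i
        ≤ ((((univ.filter fun p : V × V => (G i).Adj p.1 p.2).filter
            fun p => f p.1 = s' ∧ f p.2 = t').card : ℝ)) := by
    intro i s' t'
    by_contra hlt
    push_neg at hlt
    exact hf i s' t' (by rw [hBad]; exact mem_filter.mpr ⟨mem_univ f, hlt⟩)
  refine ⟨fun s => univ.filter fun v => f v = s, ?_, ?_, ?_, ?_⟩
  · intro s t hst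
    rw [Finset.disjoint_left]
    intro v hv hv'
    rw [mem_filter] at hv hv'
    exact hst (hv.2 ▸ hv'.2 ▸ rfl)
  · exact Finset.eq_univ_of_forall fun v =>
      Finset.mem_biUnion.mpr ⟨f v, mem_univ _, mem_filter.mpr ⟨mem_univ _, rfl⟩⟩
  · intro i s t hst
    have hdisj : Disjoint (univ.filter fun v => f v = s) (univ.filter fun v => f v = t) := by
      rw [Finset.disjoint_left]
      intro v hv hv'
      rw [mem_filter] at hv hv'
      exact hst (hv.2 ▸ hv'.2 ▸ rfl)
    have heq : ((univ.filter fun p : V × V => (G i).Adj p.1 p.2).filter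
        fun p => f p.1 = s ∧ f p.2 = t)
        = ((univ.filter fun p : V × V => (G i).Adj p.1 p.2).filter
          fun p => p.1 ∈ (univ.filter fun v => f v = s) ∧ p.2 ∈ (univ.filter fun v => f v = t)) := by
      apply Finset.filter_congr
      intro p _
      simp only [mem_filter, mem_univ, true_and]
    have h := hgood i s t
    rw [heq, pairCount_between (G i) hdisj] at h
    exact h
  · intro i s
    have heq : ((univ.filter fun p : V × V => (G i).Adj p.1 p.2).filter
        fun p => f p.1 = s ∧ f p.2 = s)
        = ((univ.filter fun p : V × V => (G i).Adj p.1 p.2).filter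
          fun p => p.1 ∈ (univ.filter fun v => f v = s) ∧ p.2 ∈ (univ.filter fun v => f v = s)) := by
      apply Finset.filter_congr
      intro p _
      simp only [mem_filter, mem_univ, true_and]
    have h := hgood i s s
    rw [heq, pairCount_within (G i)] at h
    have hcast : ((2 * eWithin (G i) (univ.filter fun v => f v = s) : ℕ) : ℝ)
        = 2 * ((eWithin (G i) (univ.filter fun v => f v = s) : ℝ)) := by push_cast; ring
    rw [hcast] at h
    have hnn : (0:ℝ) ≤ ε ^ ((1:ℝ)/4) * m i := by
      have := Real.rpow_nonneg hε.le ((1:ℝ)/4)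
      positivity
    rw [ge_iff_le]
    show (m i : ℝ) / (k:ℝ) ^ 2 - ε ^ ((1:ℝ)/4) * m i
      ≤ ((eWithin (G i) (univ.filter fun v => f v = s) : ℝ))
    have hh : 2 * ((m i : ℝ) / (k:ℝ) ^ 2) - ε ^ ((1:ℝ)/4) * (m i : ℝ)
        ≤ 2 * ((eWithin (G i) (univ.filter fun v => f v = s) : ℝ)) := by
      have e1 : 2 * ((m i : ℝ) / (k:ℝ) ^ 2) = 2 * (m i : ℝ) / (k:ℝ) ^ 2 := by ring
      rw [e1]
      exact h
    linarith [hh, hnn]
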